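/- Let p be a prime and 1 ≤ n ≤ p. Let f, g ∈ ℤ[x] have canonical representations f = Σ_m f_m·(x^p−x)^m and g = Σ_m g_m·(x^p−x)^m with deg f_m < p and deg g_m < p for all m. Then [f]_{p^n} = [g]_{p^n} if and only if f_k ≡ g_k (mod p^{n−k}ℤ[x]) for all 0 ≤ k < n. -/

import Mathlib

open Polynomial Finset

-- Fermat
lemma fermat_dvd (p : ℕ) (hp : p.Prime) (a : ℤ) : (p : ℤ) ∣ a ^ p - a := by
  haveI : Fact p.Prime := ⟨hp⟩
  have : ((a ^ p - a : ℤ) : ZMod p) = 0 := by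
    push_cast
    rw [ZMod.pow_card]
    ring
  exact_mod_cast (ZMod.intCast_zmod_eq_zero_iff_dvd _ p).mp this

lemma dvd_eval_of_dvd_coeff {c : ℤ} {h : Polynomial ℤ} (H : ∀ i, c ∣ h.coeff i) (a : ℤ) :
    c ∣ h.eval a := by
  obtain ⟨q, hq⟩ := (Polynomial.C_dvd_iff_dvd_coeff c h).mpr H
  rw [hq]
  simp [Dvd.intro]

-- null of degree < p mod p has all coeffs divisible by p
lemma coeff_dvd_of_null (p : ℕ) (hp : p.Prime) (h : Polynomial ℤ)
    (hdeg : h.degree < (p : WithBot ℕ)) (hnull : ∀ a : ℤ, (p : ℤ) ∣ h.eval a) :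
    ∀ i, (p : ℤ) ∣ h.coeff i := by
  haveI : Fact p.Prime := ⟨hp⟩
  intro i
  set h' : Polynomial (ZMod p) := h.map (Int.castRingHom (ZMod p)) with hh'
  have hz : h' = 0 := by
    apply Polynomial.eq_zero_of_natDegree_lt_card_of_eval_eq_zero h'
      (f := (id : ZMod p → ZMod p)) Function.injective_id
    · intro x
      obtain ⟨a, rfl⟩ := ZMod.intCast_surjective x
      have : ((a : ℤ) : ZMod p) = (Int.castRingHom (ZMod p)) a := rfl
      rw [id_eq, this, Polynomial.eval_map, Polynomial.eval₂_at_apply]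
      simpa [ZMod.intCast_zmod_eq_zero_iff_dvd] using hnull a
    · rw [ZMod.card]
      calc h'.natDegree ≤ h.natDegree := Polynomial.natDegree_map_le
        _ < p := by
          by_cases h0 : h = 0
          · simp [h0, hp.pos]
          · exact_mod_cast (Polynomial.degree_eq_natDegree h0) ▸ hdeg
  have : h'.coeff i = 0 := by rw [hz]; simp
  rw [hh', Polynomial.coeff_map] at this
  simpa [ZMod.intCast_zmod_eq_zero_iff_dvd] using this

noncomputable def uu (p : ℕ) (a : ℤ) : ℤ := (a ^ p - a) / p

lemma uu_spec (p : ℕ) (hp : p.Prime) (a : ℤ) : (p : ℤ) * uu p a = a ^ p - a :=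
  Int.mul_ediv_cancel' (fermat_dvd p hp a)

lemma uu_shift (p : ℕ) (hp : p.Prime) (a t : ℤ) :
    (p : ℤ) ∣ uu p (a + p * t) - (uu p a - t) := by
  have hp0 : (p : ℤ) ≠ 0 := by exact_mod_cast hp.ne_zero
  have key : (p : ℤ) ^ 2 ∣ (a + p * t) ^ p - a ^ p := by
    have h := dvd_sub_pow_of_dvd_sub (p := p) (a := a + p * t) (b := a) (by ring_nf; simp) 1
    simpa using h
  have expand : (p : ℤ) * (uu p (a + p * t) - (uu p a - t)) = (a + p * t) ^ p - a ^ p := by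
    rw [mul_sub, mul_sub, uu_spec p hp, uu_spec p hp]
    ring
  have : (p : ℤ) * (p : ℤ) ∣ (p : ℤ) * (uu p (a + p * t) - (uu p a - t)) := by
    rw [expand]; rw [sq] at key; exact key
  exact (mul_dvd_mul_iff_left hp0).mp this

lemma main_null (p : ℕ) (hp : p.Prime) :
    ∀ n, n ≤ p → ∀ (M : ℕ) (F : ℕ → Polynomial ℤ),
      (∀ m, (F m).degree < (p : WithBot ℕ)) →
      (∀ m, M ≤ m → F m = 0) →
      (∀ a : ℤ, (p : ℤ) ^ n ∣ ∑ m ∈ range M, (F m).eval a * (a ^ p - a) ^ m) →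
      ∀ k, k < n → ∀ i, (p : ℤ) ^ (n - k) ∣ (F k).coeff i := by
  intro n
  induction n with
  | zero => intro _ M F _ _ _ k hk; omega
  | succ n IH =>
    intro hnp M F hdeg hF0 hnull
    have hp0 : (p : ℤ) ≠ 0 := by exact_mod_cast hp.ne_zero
    have hprev : ∀ k, k < n → ∀ i, (p : ℤ) ^ (n - k) ∣ (F k).coeff i := by
      apply IH (le_trans (Nat.le_succ n) hnp) M F hdeg hF0
      intro a
      exact dvd_trans (pow_dvd_pow _ (Nat.le_succ n)) (hnull a)
    have hex : ∀ k, ∃ Hk : Polynomial ℤ,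
        (k ≤ n → F k = Polynomial.C ((p : ℤ) ^ (n - k)) * Hk) := by
      intro k
      rcases lt_or_ge k n with hk | hk
      · obtain ⟨Hk, hHk⟩ := (Polynomial.C_dvd_iff_dvd_coeff _ _).mpr (hprev k hk)
        exact ⟨Hk, fun _ => hHk⟩
      · refine ⟨F k, fun hkn => ?_⟩
        have : k = n := le_antisymm hkn hk
        subst this
        simp
    choose H hH using hex
    have hHdeg : ∀ k, k ≤ n → (H k).degree < (p : WithBot ℕ) := by
      intro k hk
      have : (F k).degree = (H k).degree := by
        rw [hH k hk, Polynomial.degree_mul,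
          Polynomial.degree_C (pow_ne_zero _ hp0), zero_add]
      exact this ▸ hdeg k
    -- claim1
    have claim1 : ∀ b : ℤ, (p : ℤ) ∣ ∑ m ∈ range (n + 1), (H m).eval b * (uu p b) ^ m := by
      intro b
      have hupow : ∀ m : ℕ, (b ^ p - b) ^ m = (p : ℤ) ^ m * (uu p b) ^ m := by
        intro m
        rw [← mul_pow, uu_spec p hp]
      set N := max M (n + 1) with hN
      have hSN : ∑ m ∈ range M, (F m).eval b * (b ^ p - b) ^ m
          = ∑ m ∈ range N, (F m).eval b * (b ^ p - b) ^ m := by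
        apply Finset.sum_subset (Finset.range_subset_range.mpr (le_max_left _ _))
        intro x _ hx
        rw [hF0 x (by simpa using hx)]
        simp
      have hsplit : ∑ m ∈ range (n + 1), (F m).eval b * (b ^ p - b) ^ m
            + ∑ m ∈ Finset.Ico (n + 1) N, (F m).eval b * (b ^ p - b) ^ m
          = ∑ m ∈ range N, (F m).eval b * (b ^ p - b) ^ m :=
        Finset.sum_range_add_sum_Ico _ (le_max_right _ _)
      have htail : (p : ℤ) ^ (n + 1) ∣
          ∑ m ∈ Finset.Ico (n + 1) N, (F m).eval b * (b ^ p - b) ^ m := by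
        apply Finset.dvd_sum
        intro m hm
        have hm' : n + 1 ≤ m := (Finset.mem_Ico.mp hm).1
        rw [hupow m]
        exact Dvd.dvd.mul_left (Dvd.dvd.mul_right (pow_dvd_pow _ hm') _) _
      have hhead : (p : ℤ) ^ (n + 1) ∣
          ∑ m ∈ range (n + 1), (F m).eval b * (b ^ p - b) ^ m := by
        have h := hnull b
        rw [hSN, ← hsplit] at h
        exact (dvd_add_left htail).mp h
      have htrans : ∑ m ∈ range (n + 1), (F m).eval b * (b ^ p - b) ^ m
          = (p : ℤ) ^ n * ∑ m ∈ range (n + 1), (H m).eval b * (uu p b) ^ m := by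
        rw [Finset.mul_sum]
        apply Finset.sum_congr rfl
        intro m hm
        have hm' : m ≤ n := by simpa [Nat.lt_succ_iff] using hm
        rw [hH m hm', hupow m, Polynomial.eval_mul, Polynomial.eval_C]
        rw [show ((p:ℤ)^(n-m) * (H m).eval b) * ((p:ℤ)^m * (uu p b)^m)
            = ((p:ℤ)^(n-m) * (p:ℤ)^m) * ((H m).eval b * (uu p b)^m) by ring,
          ← pow_add, Nat.sub_add_cancel hm']
      rw [htrans, pow_succ] at hhead
      exact (mul_dvd_mul_iff_left (pow_ne_zero n hp0)).mp hhead
    -- claim2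
    have claim2 : ∀ a v : ℤ, (p : ℤ) ∣ ∑ m ∈ range (n + 1), (H m).eval a * v ^ m := by
      intro a v
      set t := uu p a - v with ht
      set b := a + p * t with hb
      have h1 := claim1 b
      have hab : (p : ℤ) ∣ a - b := ⟨-t, by rw [hb]; ring⟩
      have huv : (p : ℤ) ∣ v - uu p b := by
        have h2 := uu_shift p hp a t
        rw [show uu p a - t = v from by rw [ht]; ring] at h2
        exact dvd_sub_comm.mp h2
      have hdiff : (p : ℤ) ∣ (∑ m ∈ range (n + 1), (H m).eval a * v ^ m)
          - ∑ m ∈ range (n + 1), (H m).eval b * (uu p b) ^ m := by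
        rw [← Finset.sum_sub_distrib]
        apply Finset.dvd_sum
        intro m _
        have e1 : (p : ℤ) ∣ (H m).eval a - (H m).eval b :=
          dvd_trans hab (Polynomial.sub_dvd_eval_sub a b (H m))
        have e2 : (p : ℤ) ∣ v ^ m - (uu p b) ^ m :=
          dvd_trans huv (sub_dvd_pow_sub_pow v (uu p b) m)
        have : (H m).eval a * v ^ m - (H m).eval b * (uu p b) ^ m
            = ((H m).eval a - (H m).eval b) * v ^ m
              + (H m).eval b * (v ^ m - (uu p b) ^ m) := by ring
        rw [this]
        exact dvd_add (e1.mul_right _) (e2.mul_left _)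
      have := dvd_add hdiff h1
      simpa using this
    -- claim3
    have claim3 : ∀ m, m ≤ n → ∀ a : ℤ, (p : ℤ) ∣ (H m).eval a := by
      intro m hm a
      set Q : Polynomial ℤ :=
        ∑ j ∈ range (n + 1), Polynomial.C ((H j).eval a) * Polynomial.X ^ j with hQ
      have hQdeg : Q.degree < (p : WithBot ℕ) := by
        apply lt_of_le_of_lt (Polynomial.degree_sum_le _ _)
        apply Finset.sup_lt_iff (by exact_mod_cast WithBot.bot_lt_coe p) |>.mpr
        intro j hj
        apply lt_of_le_of_lt (Polynomial.degree_C_mul_X_pow_le j _)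
        exact_mod_cast Nat.lt_of_lt_of_le (Finset.mem_range.mp hj) hnp
      have hQnull : ∀ v : ℤ, (p : ℤ) ∣ Q.eval v := by
        intro v
        have : Q.eval v = ∑ j ∈ range (n + 1), (H j).eval a * v ^ j := by
          simp [hQ, Polynomial.eval_finset_sum]
        rw [this]
        exact claim2 a v
      have := coeff_dvd_of_null p hp Q hQdeg hQnull m
      rwa [hQ, Polynomial.finset_sum_coeff, Finset.sum_eq_single m
        (fun j _ hj => by simp [Polynomial.coeff_C_mul, Polynomial.coeff_X_pow, Ne.symm hj])
        (fun hm' => absurd (Finset.mem_range.mpr (Nat.lt_succ_of_le hm)) hm'),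
        Polynomial.coeff_C_mul, Polynomial.coeff_X_pow, if_pos rfl, mul_one] at this
    -- claim4 and conclusion
    intro k hk i
    have hk' : k ≤ n := Nat.lt_succ_iff.mp hk
    have h4 : (p : ℤ) ∣ (H k).coeff i :=
      coeff_dvd_of_null p hp (H k) (hHdeg k hk') (claim3 k hk') i
    have : (F k).coeff i = (p : ℤ) ^ (n - k) * (H k).coeff i := by
      rw [hH k hk', Polynomial.coeff_C_mul]
    rw [this, Nat.succ_sub hk', pow_succ]
    exact mul_dvd_mul_left _ h4

lemma easy_dir (p n M : ℕ) (hp : p.Prime) (D : ℕ → Polynomial ℤ)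
    (h : ∀ k, k < n → ∀ i, (p : ℤ) ^ (n - k) ∣ (D k).coeff i) (a : ℤ) :
    (p : ℤ) ^ n ∣ ∑ m ∈ Finset.range M, (D m).eval a * (a ^ p - a) ^ m := by
  apply Finset.dvd_sum
  intro m _
  have hfer : (p : ℤ) ^ m ∣ (a ^ p - a) ^ m := pow_dvd_pow_of_dvd (fermat_dvd p hp a) m
  rcases lt_or_ge m n with hm | hm
  · have h1 : (p : ℤ) ^ (n - m) ∣ (D m).eval a := dvd_eval_of_dvd_coeff (h m hm) a
    have := mul_dvd_mul h1 hfer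
    rwa [← pow_add, Nat.sub_add_cancel hm.le] at this
  · exact Dvd.dvd.mul_left (dvd_trans (pow_dvd_pow _ hm) hfer) _

lemma bridge (p n : ℕ) (hp : p.Prime) (hn1 : 1 ≤ n) (f g : Polynomial ℤ) :
    ((fun x : ZMod (p ^ n) => Polynomial.aeval x f) =
        fun x : ZMod (p ^ n) => Polynomial.aeval x g) ↔
      ∀ a : ℤ, (p : ℤ) ^ n ∣ f.eval a - g.eval a := by
  have key : ∀ (h : Polynomial ℤ) (a : ℤ),
      Polynomial.aeval ((a : ℤ) : ZMod (p ^ n)) h = ((h.eval a : ℤ) : ZMod (p ^ n)) := by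
    intro h a
    rw [Polynomial.aeval_def, show ((a : ℤ) : ZMod (p ^ n)) = algebraMap ℤ (ZMod (p ^ n)) a
        from rfl, Polynomial.eval₂_at_apply]
    rfl
  constructor
  · intro hEq a
    have := congrFun hEq ((a : ℤ) : ZMod (p ^ n))
    rw [key f a, key g a] at this
    have h0 : ((f.eval a - g.eval a : ℤ) : ZMod (p ^ n)) = 0 := by
      push_cast
      rw [this]; ring
    have := (ZMod.intCast_zmod_eq_zero_iff_dvd _ _).mp h0
    exact_mod_cast this
  · intro hdvd
    funext x
    obtain ⟨a, rfl⟩ := ZMod.intCast_surjective x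
    rw [key f a, key g a]
    have h0 : ((f.eval a - g.eval a : ℤ) : ZMod (p ^ n)) = 0 := by
      rw [ZMod.intCast_zmod_eq_zero_iff_dvd]
      exact_mod_cast hdvd a
    push_cast at h0
    linear_combination h0

/-- Let `1 ≤ n ≤ p` and let `f = Σ_m F_m (x^p - x)^m`, `g = Σ_m G_m (x^p - x)^m`
be canonical representations (all `F_m, G_m` of degree `< p`).  Then `f` and `g`
induce the same function on `ℤ/p^nℤ` if and only if `F_k ≡ G_k (mod p^{n-k}ℤ[x])`
for all `0 ≤ k < n` (i.e. every coefficient of `F_k - G_k` is divisible by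
`p^{n-k}`). -/
theorem eq_mod_pn_iff_canonical_congruences (p : ℕ) (hp : p.Prime)
    (n : ℕ) (hn1 : 1 ≤ n) (hnp : n ≤ p)
    (M : ℕ) (F G : ℕ → Polynomial ℤ)
    (hFdeg : ∀ m, (F m).degree < (p : WithBot ℕ))
    (hGdeg : ∀ m, (G m).degree < (p : WithBot ℕ))
    (hF0 : ∀ m, M ≤ m → F m = 0) (hG0 : ∀ m, M ≤ m → G m = 0)
    (f g : Polynomial ℤ)
    (hf : f = ∑ m ∈ Finset.range M, F m * (Polynomial.X ^ p - Polynomial.X) ^ m)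
    (hg : g = ∑ m ∈ Finset.range M, G m * (Polynomial.X ^ p - Polynomial.X) ^ m) :
    ((fun x : ZMod (p ^ n) => Polynomial.aeval x f) =
        fun x : ZMod (p ^ n) => Polynomial.aeval x g) ↔
      ∀ k < n, ∀ i : ℕ, (p : ℤ) ^ (n - k) ∣ (F k - G k).coeff i := by
  have hevalsub : ∀ a : ℤ, f.eval a - g.eval a
      = ∑ m ∈ range M, ((F m - G m).eval a) * (a ^ p - a) ^ m := by
    intro a
    rw [hf, hg, Polynomial.eval_finset_sum, Polynomial.eval_finset_sum, ← Finset.sum_sub_distrib]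
    apply Finset.sum_congr rfl
    intro m _
    simp only [Polynomial.eval_mul, Polynomial.eval_pow, Polynomial.eval_sub,
      Polynomial.eval_X, Polynomial.eval_pow]
    ring
  rw [bridge p n hp hn1 f g]
  constructor
  · intro hnull k hk i
    apply main_null p hp n hnp M (fun m => F m - G m)
      (fun m => lt_of_le_of_lt (Polynomial.degree_sub_le _ _) (max_lt (hFdeg m) (hGdeg m)))
      (fun m hm => by simp [hF0 m hm, hG0 m hm])
      (fun a => (hevalsub a) ▸ hnull a) k hk i
  · intro hcoeff a
    rw [hevalsub a]
    exact easy_dir p n M hp _ hcoeff a
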